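/- Let C and C_θ be real symmetric positive definite n×n matrices, set Δ = C − C_θ, and assume ‖C^{-1}‖_sp·‖Δ‖_sp < 1. Define B = C^{-1} + C^{-1}ΔC^{-1} = (I_n + C^{-1}Δ)C^{-1}. Then B is invertible, B^{-1} = C·Σ_{k=0}^∞ (−C^{-1}Δ)^k, and ‖C_θ^{-1/2}(B^{-1} − C_θ)C_θ^{-1/2}‖_F ≤ ‖C_θ^{-1}‖_sp · ‖Δ‖_F · ‖C^{-1}‖_sp‖Δ‖_sp / (1 − ‖C^{-1}‖_sp‖Δ‖_sp). -/

import Mathlib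

noncomputable def frobNorm {n : ℕ} (A : Matrix (Fin n) (Fin n) ℝ) : ℝ :=
  Real.sqrt (∑ i, ∑ j, (A i j) ^ 2)

noncomputable def spNorm {n : ℕ} (A : Matrix (Fin n) (Fin n) ℝ) : ℝ :=
  ‖Matrix.toEuclideanCLM (𝕜 := ℝ) A‖

open scoped ComplexOrder in
/-- The positive semidefinite square root of a positive semidefinite matrix
(the definition of `Matrix.PosSemidef.sqrt` in the older Mathlib, since removed). -/
noncomputable def Matrix.PosSemidef.sqrt {n 𝕜 : Type*} [Fintype n] [DecidableEq n] [RCLike 𝕜]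
    {A : Matrix n n 𝕜} (hA : A.PosSemidef) : Matrix n n 𝕜 :=
  hA.1.eigenvectorUnitary.1 * Matrix.diagonal ((↑) ∘ (√·) ∘ hA.1.eigenvalues) *
  (star hA.1.eigenvectorUnitary : Matrix n n 𝕜)

open scoped Matrix.Norms.L2Operator Matrix

lemma sqrt_isHermitian_real {n : ℕ} {A : Matrix (Fin n) (Fin n) ℝ} (hA : A.PosSemidef) :
    hA.sqrt.IsHermitian := by
  unfold Matrix.PosSemidef.sqrt Matrix.IsHermitian
  rw [Matrix.conjTranspose_mul, Matrix.conjTranspose_mul, Matrix.diagonal_conjTranspose]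
  simp [Matrix.star_eq_conjTranspose, mul_assoc]

lemma sqrt_mul_self_real {n : ℕ} {A : Matrix (Fin n) (Fin n) ℝ} (hA : A.PosSemidef) :
    hA.sqrt * hA.sqrt = A := by
  unfold Matrix.PosSemidef.sqrt
  set U : Matrix (Fin n) (Fin n) ℝ := hA.1.eigenvectorUnitary.1 with hU
  have hUU : (star hA.1.eigenvectorUnitary : Matrix (Fin n) (Fin n) ℝ) * U = 1 :=
    Unitary.coe_star_mul_self _
  have hD : Matrix.diagonal (((↑) : ℝ → ℝ) ∘ (√·) ∘ hA.1.eigenvalues) *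
      Matrix.diagonal (((↑) : ℝ → ℝ) ∘ (√·) ∘ hA.1.eigenvalues) =
      Matrix.diagonal (RCLike.ofReal ∘ hA.1.eigenvalues) := by
    rw [Matrix.diagonal_mul_diagonal]
    congr 1
    funext i
    simp [Real.mul_self_sqrt (hA.eigenvalues_nonneg i)]
  calc U * Matrix.diagonal (((↑) : ℝ → ℝ) ∘ (√·) ∘ hA.1.eigenvalues) *
        (star hA.1.eigenvectorUnitary : Matrix (Fin n) (Fin n) ℝ) *
        (U * Matrix.diagonal (((↑) : ℝ → ℝ) ∘ (√·) ∘ hA.1.eigenvalues) *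
        (star hA.1.eigenvectorUnitary : Matrix (Fin n) (Fin n) ℝ))
      = U * (Matrix.diagonal (((↑) : ℝ → ℝ) ∘ (√·) ∘ hA.1.eigenvalues) *
        ((star hA.1.eigenvectorUnitary : Matrix (Fin n) (Fin n) ℝ) * U) *
        Matrix.diagonal (((↑) : ℝ → ℝ) ∘ (√·) ∘ hA.1.eigenvalues)) *
        (star hA.1.eigenvectorUnitary : Matrix (Fin n) (Fin n) ℝ) := by
          simp only [mul_assoc]
    _ = A := by
      rw [hUU, mul_one, hD]
      conv_rhs => rw [hA.1.spectral_theorem]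
      rw [Unitary.conjStarAlgAut_apply]

lemma spNorm_eq_norm {n : ℕ} (A : Matrix (Fin n) (Fin n) ℝ) : spNorm A = ‖A‖ := rfl

lemma frobNorm_nonneg {n : ℕ} (A : Matrix (Fin n) (Fin n) ℝ) : 0 ≤ frobNorm A :=
  Real.sqrt_nonneg _

lemma frobNorm_swap {n : ℕ} (A : Matrix (Fin n) (Fin n) ℝ) :
    frobNorm A = Real.sqrt (∑ j, ∑ i, (A i j) ^ 2) := by
  rw [frobNorm, Finset.sum_comm]

lemma eucl_norm_sq {n : ℕ} (v : EuclideanSpace ℝ (Fin n)) : ‖v‖ ^ 2 = ∑ i, v i ^ 2 := by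
  rw [EuclideanSpace.norm_eq, Real.sq_sqrt (by positivity)]
  simp [Real.norm_eq_abs, sq_abs]

/-- Frobenius norm bound: `frob (X*Y) ≤ ‖X‖ * frob Y`. -/
lemma frob_mul_le_left {n : ℕ} (X Y : Matrix (Fin n) (Fin n) ℝ) :
    frobNorm (X * Y) ≤ ‖X‖ * frobNorm Y := by
  rw [frobNorm_swap, frobNorm_swap]
  have key : ∑ j, ∑ i, ((X * Y) i j) ^ 2 ≤ ‖X‖ ^ 2 * ∑ j, ∑ i, (Y i j) ^ 2 := by
    rw [Finset.mul_sum]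
    refine Finset.sum_le_sum fun j _ => ?_
    set x : EuclideanSpace ℝ (Fin n) := (WithLp.equiv 2 (Fin n → ℝ)).symm (fun i => Y i j) with hx
    have hxn : ‖x‖ ^ 2 = ∑ i, (Y i j) ^ 2 := by
      rw [eucl_norm_sq]
      rfl
    have hcol : ∀ i, ((EuclideanSpace.equiv (Fin n) ℝ).symm (X *ᵥ (fun i => Y i j))) i
        = (X * Y) i j := by
      intro i
      simp [Matrix.mul_apply, Matrix.mulVec, dotProduct]
    have hb := Matrix.l2_opNorm_mulVec X x
    have hb2 : ‖(EuclideanSpace.equiv (Fin n) ℝ).symm (X *ᵥ (fun i => Y i j))‖ ^ 2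
        ≤ (‖X‖ * ‖x‖) ^ 2 := by
      apply pow_le_pow_left₀ (norm_nonneg _) _ 2
      exact hb
    rw [eucl_norm_sq] at hb2
    calc ∑ i, ((X * Y) i j) ^ 2
        = ∑ i, (((EuclideanSpace.equiv (Fin n) ℝ).symm (X *ᵥ (fun i => Y i j))) i) ^ 2 := by
          simp_rw [hcol]
      _ ≤ (‖X‖ * ‖x‖) ^ 2 := hb2
      _ = ‖X‖ ^ 2 * ∑ i, (Y i j) ^ 2 := by rw [mul_pow, hxn]
  calc Real.sqrt (∑ j, ∑ i, ((X * Y) i j) ^ 2)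
      ≤ Real.sqrt (‖X‖ ^ 2 * ∑ j, ∑ i, (Y i j) ^ 2) := Real.sqrt_le_sqrt key
    _ = ‖X‖ * Real.sqrt (∑ j, ∑ i, (Y i j) ^ 2) := by
        rw [Real.sqrt_mul (sq_nonneg _), Real.sqrt_sq (norm_nonneg X)]

lemma frobNorm_transpose {n : ℕ} (A : Matrix (Fin n) (Fin n) ℝ) :
    frobNorm Aᵀ = frobNorm A := by
  rw [frobNorm_swap, frobNorm]
  rfl

lemma spNorm_transpose {n : ℕ} (A : Matrix (Fin n) (Fin n) ℝ) : ‖Aᵀ‖ = ‖A‖ := by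
  rw [← Matrix.conjTranspose_eq_transpose_of_trivial]
  exact Matrix.l2_opNorm_conjTranspose A

/-- Frobenius norm bound: `frob (Y*Z) ≤ frob Y * ‖Z‖`. -/
lemma frob_mul_le_right {n : ℕ} (Y Z : Matrix (Fin n) (Fin n) ℝ) :
    frobNorm (Y * Z) ≤ frobNorm Y * ‖Z‖ := by
  have := frob_mul_le_left Zᵀ Yᵀ
  rw [← Matrix.transpose_mul, frobNorm_transpose, frobNorm_transpose, spNorm_transpose] at this
  linarith

lemma norm_one_le_matrix {n : ℕ} : ‖(1 : Matrix (Fin n) (Fin n) ℝ)‖ ≤ 1 := by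
  rw [Matrix.cstar_norm_def, map_one]
  exact ContinuousLinearMap.norm_id_le

theorem stmt12 {n : ℕ} (C Cθ : Matrix (Fin n) (Fin n) ℝ) (hC : C.PosDef) (hCθ : Cθ.PosDef)
    (h : spNorm C⁻¹ * spNorm (C - Cθ) < 1) :
    IsUnit (C⁻¹ + C⁻¹ * (C - Cθ) * C⁻¹)
    ∧ (C⁻¹ + C⁻¹ * (C - Cθ) * C⁻¹)⁻¹ = C * ∑' k : ℕ, (-(C⁻¹ * (C - Cθ))) ^ k
    ∧ frobNorm ((hCθ.posSemidef.sqrt)⁻¹ *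
          ((C⁻¹ + C⁻¹ * (C - Cθ) * C⁻¹)⁻¹ - Cθ) * (hCθ.posSemidef.sqrt)⁻¹) ≤
        spNorm Cθ⁻¹ * frobNorm (C - Cθ) * (spNorm C⁻¹ * spNorm (C - Cθ)) /
          (1 - spNorm C⁻¹ * spNorm (C - Cθ)) := by
  simp only [spNorm_eq_norm] at h ⊢
  set Δ : Matrix (Fin n) (Fin n) ℝ := C - Cθ with hΔ
  set M : Matrix (Fin n) (Fin n) ℝ := C⁻¹ * Δ with hMdef
  set r : ℝ := ‖C⁻¹‖ * ‖Δ‖ with hrdef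
  have hr0 : 0 ≤ r := mul_nonneg (norm_nonneg _) (norm_nonneg _)
  have hr1 : r < 1 := h
  have h1r : 0 < 1 - r := by linarith
  have hMr : ‖M‖ ≤ r := Matrix.l2_opNorm_mul _ _
  have hM' : ‖-M‖ < 1 := by rw [norm_neg]; exact lt_of_le_of_lt hMr hr1
  have hdet : IsUnit C.det := hC.det_pos.ne'.isUnit
  -- the unit 1 + M
  have hSum : (1 + M) * (∑' k : ℕ, (-M) ^ k) = 1 := by
    have := mul_neg_geom_series (-M) hM'
    rwa [sub_neg_eq_add] at this
  have h1M_unit : IsUnit (1 + M) := by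
    have := isUnit_one_sub_of_norm_lt_one hM'
    rwa [sub_neg_eq_add] at this
  have h1Mdet : IsUnit (1 + M).det := (Matrix.isUnit_iff_isUnit_det _).mp h1M_unit
  have hinv1M : (1 + M)⁻¹ = ∑' k : ℕ, (-M) ^ k := Matrix.inv_eq_right_inv hSum
  have hBfact : C⁻¹ + C⁻¹ * Δ * C⁻¹ = (1 + M) * C⁻¹ := by
    rw [add_mul, one_mul, hMdef]
  have hCinv_unit : IsUnit (C⁻¹ : Matrix (Fin n) (Fin n) ℝ) :=
    ⟨⟨C⁻¹, C, Matrix.nonsing_inv_mul C hdet, Matrix.mul_nonsing_inv C hdet⟩, rfl⟩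
  have hBunit : IsUnit (C⁻¹ + C⁻¹ * Δ * C⁻¹) := by
    rw [hBfact]; exact h1M_unit.mul hCinv_unit
  have hBinv' : (C⁻¹ + C⁻¹ * Δ * C⁻¹)⁻¹ = C * (1 + M)⁻¹ := by
    rw [hBfact, Matrix.mul_inv_rev, Matrix.nonsing_inv_nonsing_inv C hdet]
  have hBinv : (C⁻¹ + C⁻¹ * Δ * C⁻¹)⁻¹ = C * ∑' k : ℕ, (-M) ^ k := by
    rw [hBinv', hinv1M]
  refine ⟨hBunit, hBinv, ?_⟩
  -- the error term identity
  have hXinv : (1 + M) * (1 + M)⁻¹ = 1 := Matrix.mul_nonsing_inv _ h1Mdet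
  have hXinv' : (1 + M)⁻¹ * (1 + M) = 1 := Matrix.nonsing_inv_mul _ h1Mdet
  have hCM : C * M = Δ := by
    rw [hMdef, ← mul_assoc, Matrix.mul_nonsing_inv C hdet, one_mul]
  have h2 : ((C⁻¹ + C⁻¹ * Δ * C⁻¹)⁻¹ - Cθ) * (1 + M) = Δ * M := by
    rw [hBinv', sub_mul, mul_assoc, hXinv', mul_one]
    have : Δ * M = C * M - Cθ * M := by rw [hΔ, sub_mul]
    rw [this, hCM, mul_add, mul_one, hΔ]
    abel
  have hE : (C⁻¹ + C⁻¹ * Δ * C⁻¹)⁻¹ - Cθ = Δ * M * (1 + M)⁻¹ := by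
    calc (C⁻¹ + C⁻¹ * Δ * C⁻¹)⁻¹ - Cθ
        = (((C⁻¹ + C⁻¹ * Δ * C⁻¹)⁻¹ - Cθ) * (1 + M)) * (1 + M)⁻¹ := by
          rw [mul_assoc _ (1 + M) (1 + M)⁻¹, hXinv, mul_one]
      _ = Δ * M * (1 + M)⁻¹ := by rw [h2]
  -- bound on the inverse
  have hq : ‖(1 + M)⁻¹‖ ≤ (1 - r)⁻¹ := by
    rw [hinv1M]
    have hs : ∀ k : ℕ, ‖(-M) ^ k‖ ≤ r ^ k := by
      intro k
      induction k with
      | zero => simpa using norm_one_le_matrix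
      | succ k ih =>
        calc ‖(-M) ^ (k + 1)‖ = ‖(-M) ^ k * (-M)‖ := by rw [pow_succ]
          _ ≤ ‖(-M) ^ k‖ * ‖-M‖ := norm_mul_le _ _
          _ ≤ r ^ k * r := by
              apply mul_le_mul ih _ (norm_nonneg _) (pow_nonneg hr0 _)
              rw [norm_neg]; exact hMr
          _ = r ^ (k + 1) := by rw [pow_succ]
    have hgeo : Summable fun k : ℕ => r ^ k := summable_geometric_of_lt_one hr0 hr1
    have hsum : Summable fun k : ℕ => ‖(-M) ^ k‖ :=
      Summable.of_nonneg_of_le (fun _ => norm_nonneg _) hs hgeo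
    calc ‖∑' k : ℕ, (-M) ^ k‖ ≤ ∑' k : ℕ, ‖(-M) ^ k‖ := norm_tsum_le_tsum_norm hsum
      _ ≤ ∑' k : ℕ, r ^ k := Summable.tsum_le_tsum hs hsum hgeo
      _ = (1 - r)⁻¹ := tsum_geometric_of_lt_one hr0 hr1
  -- properties of S = sqrt⁻¹
  set S : Matrix (Fin n) (Fin n) ℝ := (hCθ.posSemidef.sqrt)⁻¹ with hSdef
  have hSherm : Sᴴ = S := (sqrt_isHermitian_real hCθ.posSemidef).inv
  have hSS : S * S = Cθ⁻¹ := by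
    rw [hSdef, ← Matrix.mul_inv_rev, sqrt_mul_self_real hCθ.posSemidef]
  have hSnorm : ‖S‖ * ‖S‖ = ‖Cθ⁻¹‖ := by
    calc ‖S‖ * ‖S‖ = ‖star S * S‖ := (CStarRing.norm_star_mul_self).symm
      _ = ‖Cθ⁻¹‖ := by rw [Matrix.star_eq_conjTranspose, hSherm, hSS]
  -- final estimate
  rw [hE]
  have hfact : S * (Δ * M * (1 + M)⁻¹) * S = (S * Δ) * (M * ((1 + M)⁻¹ * S)) := by
    simp only [mul_assoc]
  rw [hfact]
  have h3 : frobNorm ((S * Δ) * (M * ((1 + M)⁻¹ * S))) ≤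
      frobNorm (S * Δ) * ‖M * ((1 + M)⁻¹ * S)‖ := frob_mul_le_right _ _
  have h4 : frobNorm (S * Δ) ≤ ‖S‖ * frobNorm Δ := frob_mul_le_left _ _
  have h5 : ‖M * ((1 + M)⁻¹ * S)‖ ≤ ‖M‖ * (‖(1 + M)⁻¹‖ * ‖S‖) := by
    calc ‖M * ((1 + M)⁻¹ * S)‖ ≤ ‖M‖ * ‖(1 + M)⁻¹ * S‖ := Matrix.l2_opNorm_mul _ _
      _ ≤ ‖M‖ * (‖(1 + M)⁻¹‖ * ‖S‖) := by
          apply mul_le_mul_of_nonneg_left (Matrix.l2_opNorm_mul _ _) (norm_nonneg _)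
  have h6 : ‖M‖ * (‖(1 + M)⁻¹‖ * ‖S‖) ≤ r * ((1 - r)⁻¹ * ‖S‖) := by
    apply mul_le_mul hMr _ (mul_nonneg (norm_nonneg _) (norm_nonneg _)) hr0
    exact mul_le_mul_of_nonneg_right hq (norm_nonneg _)
  calc frobNorm ((S * Δ) * (M * ((1 + M)⁻¹ * S)))
      ≤ frobNorm (S * Δ) * ‖M * ((1 + M)⁻¹ * S)‖ := h3
    _ ≤ (‖S‖ * frobNorm Δ) * (r * ((1 - r)⁻¹ * ‖S‖)) := by
        apply mul_le_mul (h4.trans le_rfl) (h5.trans h6) (norm_nonneg _)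
          (mul_nonneg (norm_nonneg _) (frobNorm_nonneg _))
    _ = (‖S‖ * ‖S‖) * frobNorm Δ * r * (1 - r)⁻¹ := by ring
    _ = ‖Cθ⁻¹‖ * frobNorm Δ * r / (1 - r) := by rw [hSnorm, div_eq_mul_inv]
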